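/- arXiv:2412.11332 — 3 statements merged into one kernel-verified Lean document; each statement's English description precedes it below -/
import Mathlib

section
/- Let $\Xi, \Upsilon \subset K^n$ be finitely generated rank-$n$ $\mathcal{O}$-modules. Then duality reverses the module index: $[\Upsilon^* : \Xi^*]_{\mathcal{O}} = \overline{[\Xi : \Upsilon]}_{\mathcal{O}}$, where the bar denotes the nontrivial automorphism of $K$ applied to the fractional ideal. -/
open Complex NumberField
open scoped BigOperators

/-- The pairing `e(x|y) = e^{2πi Tr_{K/ℚ}(∑ᵢ xᵢ ȳᵢ)}` on `Kⁿ × Kⁿ`. -/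
noncomputable def epairK (K : Type*) [Field K] [NumberField K] (σ : K ≃+* K)
    {n : ℕ} (x y : Fin n → K) : ℂ :=
  Complex.exp (2 * Real.pi * Complex.I *
    ((Algebra.trace ℚ K (∑ i, x i * σ (y i)) : ℚ) : ℂ))

/-- The dual of an `𝒪`-module `Ξ ⊂ Kⁿ` with respect to `e(·|·)`. -/
noncomputable def dualMod (K : Type*) [Field K] [NumberField K] (σ : K ≃+* K)
    {n : ℕ} (Ξ : Submodule (𝓞 K) (Fin n → K)) : Set (Fin n → K) :=
  {v | ∀ x ∈ Ξ, epairK K σ x v = 1}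

/-- The module index `[Ξ : Υ]_𝒪` of two rank-`n` `𝒪`-modules in `Kⁿ`: the fractional
ideal generated by the determinants of `K`-endomorphisms of `Kⁿ` mapping `Ξ` into `Υ`. -/
noncomputable def moduleIndex (K : Type*) [Field K] [NumberField K] {n : ℕ}
    (Ξ Υ : Submodule (𝓞 K) (Fin n → K)) : Submodule (𝓞 K) K :=
  Submodule.span (𝓞 K)
    {d : K | ∃ f : (Fin n → K) →ₗ[K] (Fin n → K),
      (∀ x ∈ Ξ, f x ∈ Υ) ∧ d = LinearMap.det f}

section Aux


variable {K : Type*} [Field K] [NumberField K]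

/-- `σ` as a `ℚ`-algebra equivalence. -/
noncomputable def sigmaAlgEquiv (σ : K ≃+* K) : K ≃ₐ[ℚ] K :=
  AlgEquiv.ofRingEquiv (f := σ) (fun q => by
    rw [show (algebraMap ℚ K) q = (q : K) from (eq_ratCast (algebraMap ℚ K) q),
      map_ratCast])

lemma trace_sigma (σ : K ≃+* K) (x : K) :
    Algebra.trace ℚ K (σ x) = Algebra.trace ℚ K x :=
  Algebra.trace_eq_of_algEquiv (sigmaAlgEquiv σ) x

lemma sigma_sigma {σ : K ≃+* K} (ι : K →+* ℂ)
    (hσι : ∀ x : K, ι (σ x) = (starRingEnd ℂ) (ι x)) (x : K) : σ (σ x) = x := by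
  have := ι.injective
  apply this
  rw [hσι, hσι, Complex.conj_conj]

/-- The trace bilinear form on `Kⁿ` over `ℚ`. -/
noncomputable def traceB (σ : K ≃+* K) (n : ℕ) :
    LinearMap.BilinForm ℚ (Fin n → K) :=
  LinearMap.mk₂ ℚ (fun x y => Algebra.trace ℚ K (∑ i, x i * σ (y i)))
    (fun x x' y => by
      simp only [Pi.add_apply, add_mul, Finset.sum_add_distrib, map_add])
    (fun q x y => by
      simp only [Pi.smul_apply, smul_mul_assoc, ← Finset.smul_sum, map_smul])
    (fun x y y' => by
      simp only [Pi.add_apply, map_add, mul_add, Finset.sum_add_distrib])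
    (fun q x y => by
      have h : ∀ i : Fin n, x i * σ ((q • y) i) = (q : K) * (x i * σ (y i)) := fun i => by
        simp only [Pi.smul_apply, Rat.smul_def, map_mul, map_ratCast]; ring
      simp only [h, ← Rat.smul_def]
      rw [← Finset.smul_sum, map_smul])

lemma traceB_apply (σ : K ≃+* K) {n : ℕ} (x y : Fin n → K) :
    traceB σ n x y = Algebra.trace ℚ K (∑ i, x i * σ (y i)) := rfl

end Aux
section Aux2
set_option linter.unusedSectionVars false

variable {K : Type*} [Field K] [NumberField K]

lemma traceB_nondeg (σ : K ≃+* K) (n : ℕ) : (traceB σ n).Nondegenerate := by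
  refine ⟨?_, ?_⟩
  · intro x hx
    funext j
    refine (traceForm_nondegenerate ℚ K).1 (x j) fun c => ?_
    have := hx (Pi.single j (σ.symm c))
    rw [traceB_apply] at this
    rw [Finset.sum_eq_single j] at this
    · simpa [Algebra.traceForm_apply] using this
    · intro i _ hij
      simp [Pi.single_eq_of_ne hij]
    · simp
  · intro y hy
    funext j
    have h0 : σ (y j) = 0 := (traceForm_nondegenerate ℚ K).1 (σ (y j)) fun c => by
      have := hy (Pi.single j c)
      rw [traceB_apply, Finset.sum_eq_single j] at this
      · simpa [Algebra.traceForm_apply, mul_comm] using this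
      · intro i _ hij
        simp [Pi.single_eq_of_ne hij]
      · simp
    simpa using h0

lemma trace_pair_symm (σ : K ≃+* K) (hσ2 : ∀ x : K, σ (σ x) = x) {n : ℕ}
    (x y : Fin n → K) :
    Algebra.trace ℚ K (∑ i, x i * σ (y i)) = Algebra.trace ℚ K (∑ i, y i * σ (x i)) := by
  rw [← trace_sigma σ (∑ i, x i * σ (y i))]
  congr 1
  rw [map_sum]
  exact Finset.sum_congr rfl fun i _ => by rw [map_mul, hσ2, mul_comm]

lemma traceB_isSymm (σ : K ≃+* K) (hσ2 : ∀ x : K, σ (σ x) = x) (n : ℕ) :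
    (traceB σ n).IsSymm := by
  constructor
  intro x y
  simpa [traceB_apply] using trace_pair_symm σ hσ2 x y

lemma epairK_eq_one_iff (σ : K ≃+* K) {n : ℕ} (x y : Fin n → K) :
    epairK K σ x y = 1 ↔
      (Algebra.trace ℚ K (∑ i, x i * σ (y i)) : ℚ) ∈ (1 : Submodule ℤ ℚ) := by
  rw [epairK, Complex.exp_eq_one_iff]
  simp only [Submodule.mem_one]
  constructor
  · rintro ⟨m, hm⟩
    refine ⟨m, ?_⟩
    have h2 : (2 * Real.pi * Complex.I) ≠ 0 := by
      simpa [mul_comm] using Complex.two_pi_I_ne_zero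
    have : ((Algebra.trace ℚ K (∑ i, x i * σ (y i)) : ℚ) : ℂ) = (m : ℂ) := by
      apply mul_left_cancel₀ h2
      rw [hm]; ring
    exact_mod_cast this.symm
  · rintro ⟨m, hm⟩
    refine ⟨m, ?_⟩
    rw [← hm, eq_intCast (algebraMap ℤ ℚ) m]
    push_cast
    ring

lemma dualMod_eq_dualSubmodule (σ : K ≃+* K) (hσ2 : ∀ x : K, σ (σ x) = x) {n : ℕ}
    (M : Submodule (𝓞 K) (Fin n → K)) :
    dualMod K σ M = ((traceB σ n).dualSubmodule (M.restrictScalars ℤ) : Set (Fin n → K)) := by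
  ext v
  simp only [dualMod, Set.mem_setOf_eq, SetLike.mem_coe,
    LinearMap.BilinForm.mem_dualSubmodule, Submodule.restrictScalars_mem]
  constructor
  · intro h x hx
    rw [← (traceB_isSymm σ hσ2 n).eq x v]
    simpa [traceB_apply] using (epairK_eq_one_iff σ x v).mp (h x hx)
  · intro h x hx
    rw [epairK_eq_one_iff σ x v]
    have := h x hx
    rw [← (traceB_isSymm σ hσ2 n).eq x v] at this
    simpa [traceB_apply] using this

end Aux2
section Aux3
set_option linter.unusedSectionVars false
set_option maxHeartbeats 1000000

variable {K : Type*} [Field K] [NumberField K]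

lemma span_rat_eq_top {n : ℕ} (Υ : Submodule (𝓞 K) (Fin n → K))
    (hrk : Submodule.span K (Υ : Set (Fin n → K)) = ⊤) :
    Submodule.span ℚ (Υ : Set (Fin n → K)) = ⊤ := by
  have key : ∀ (a : K) (v : Fin n → K), v ∈ Submodule.span ℚ (Υ : Set (Fin n → K)) →
      a • v ∈ Submodule.span ℚ (Υ : Set (Fin n → K)) := by
    intro a v hv
    have halg : IsAlgebraic ℤ a :=
      (IsFractionRing.isAlgebraic_iff ℤ ℚ K).mpr (Algebra.IsAlgebraic.isAlgebraic a)
    obtain ⟨y, hy, hint⟩ := halg.exists_integral_multiple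
    obtain ⟨c, hc⟩ := IsIntegralClosure.isIntegral_iff (A := 𝓞 K).mp hint
    have hyK : ((y : ℚ) : K) ≠ 0 := by
      simp [hy]
    have ha : a = ((y : ℚ) : K)⁻¹ * (c : K) := by
      have hcx : (c : K) = y • a := hc
      rw [hcx, zsmul_eq_mul]
      push_cast
      have h0 : (y : K) ≠ 0 := Int.cast_ne_zero.mpr hy
      field_simp
    induction hv using Submodule.span_induction with
    | mem w hw =>
        have : a • w = ((y : ℚ)⁻¹ : ℚ) • ((c : K) • w) := by
          rw [← IsScalarTower.algebraMap_smul K ((y : ℚ)⁻¹) ((c : K) • w),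
            smul_smul, ha]
          congr 1
          rw [map_inv₀, eq_ratCast]
        rw [this]
        refine Submodule.smul_mem _ _ (Submodule.subset_span ?_)
        have : (c : K) • w = c • w := by
          rw [← algebraMap_smul K c w]
        rw [this]
        exact Υ.smul_mem c hw
    | zero => rw [smul_zero]; exact Submodule.zero_mem _
    | add w₁ w₂ h₁ h₂ ih₁ ih₂ => rw [smul_add]; exact Submodule.add_mem _ ih₁ ih₂
    | smul q w hw ih =>
        have hqa : a • q • w = q • a • w := by
          rw [← IsScalarTower.algebraMap_smul K q w, ← IsScalarTower.algebraMap_smul K q (a • w),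
            smul_smul, smul_smul, mul_comm]
        rw [hqa]
        exact Submodule.smul_mem _ q ih
  let W : Submodule K (Fin n → K) :=
    { carrier := (Submodule.span ℚ (Υ : Set (Fin n → K)) : Set (Fin n → K))
      add_mem' := fun h1 h2 => Submodule.add_mem _ h1 h2
      zero_mem' := Submodule.zero_mem _
      smul_mem' := fun a v hv => key a v hv }
  have hW : Submodule.span K (Υ : Set (Fin n → K)) ≤ W :=
    Submodule.span_le.mpr Submodule.subset_span
  rw [hrk] at hW
  rw [eq_top_iff]
  exact fun v _ => hW Submodule.mem_top

lemma dual_dual (σ : K ≃+* K) (hσ2 : ∀ x : K, σ (σ x) = x) {n : ℕ}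
    (Υ : Submodule (𝓞 K) (Fin n → K))
    (hrk : Submodule.span K (Υ : Set (Fin n → K)) = ⊤) (hfg : Υ.FG) :
    (traceB σ n).dualSubmodule ((traceB σ n).dualSubmodule (Υ.restrictScalars ℤ))
      = Υ.restrictScalars ℤ := by
  classical
  set L := Υ.restrictScalars ℤ with hL
  letI : Module.Finite (𝓞 K) Υ := Module.Finite.iff_fg.mpr hfg
  letI : Module.Finite (𝓞 K) L := Module.Finite.equiv (Submodule.restrictScalarsEquiv ℤ (𝓞 K) (Fin n → K) Υ).symm
  letI : Module.Finite ℤ L := Module.Finite.trans (𝓞 K) L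
  letI : Module.Free ℤ L := Module.free_of_finite_type_torsion_free'
  let b0 := Module.Free.chooseBasis ℤ L
  have hbspan : Submodule.span ℤ (Set.range fun i => (b0 i : Fin n → K)) = L := by
    have h := congrArg (Submodule.map L.subtype) b0.span_eq
    rwa [Submodule.map_span, Submodule.map_top, Submodule.range_subtype,
      ← Set.range_comp] at h
  have hliZ : LinearIndependent ℤ (fun i => (b0 i : Fin n → K)) :=
    b0.linearIndependent.map' L.subtype (Submodule.ker_subtype L)
  have hli : LinearIndependent ℚ (fun i => (b0 i : Fin n → K)) :=
    (LinearIndependent.iff_fractionRing ℤ ℚ).mp hliZ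
  have hsp : ⊤ ≤ Submodule.span ℚ (Set.range fun i => (b0 i : Fin n → K)) := by
    rw [← span_rat_eq_top Υ hrk]
    refine Submodule.span_le.mpr fun v hv => ?_
    have : v ∈ L := hv
    rw [← hbspan] at this
    exact Submodule.span_le_restrictScalars ℤ ℚ _ this
  let bQ : Module.Basis _ ℚ (Fin n → K) := Module.Basis.mk hli hsp
  have hrange : Set.range (bQ : _ → Fin n → K) = Set.range fun i => (b0 i : Fin n → K) := by
    rw [Module.Basis.coe_mk]
  have hLspan : L = Submodule.span ℤ (Set.range (bQ : _ → Fin n → K)) := by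
    rw [hrange, hbspan]
  rw [hLspan]
  exact LinearMap.BilinForm.dualSubmodule_dualSubmodule_of_basis _
    (traceB_nondeg σ n) (traceB_isSymm σ hσ2 n) bQ

end Aux3
section Aux4
open Matrix
set_option linter.unusedSectionVars false
set_option maxHeartbeats 1000000

variable {K : Type*} [Field K] [NumberField K]

lemma osmul (c : 𝓞 K) (x : K) : c • x = (c : K) * x := by
  rw [Algebra.smul_def]

/-- The `σ`-adjoint of a `K`-linear endomorphism of `Kⁿ`. -/
noncomputable def adjL (σ : K ≃+* K) {n : ℕ} (f : (Fin n → K) →ₗ[K] (Fin n → K)) :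
    (Fin n → K) →ₗ[K] (Fin n → K) :=
  Matrix.toLin' (((LinearMap.toMatrix' f).map σ)ᵀ)

lemma pair_adjL (σ : K ≃+* K) (hσ2 : ∀ x : K, σ (σ x) = x) {n : ℕ}
    (f : (Fin n → K) →ₗ[K] (Fin n → K)) (x y : Fin n → K) :
    ∑ i, (f x) i * σ (y i) = ∑ i, x i * σ (adjL σ f y i) := by
  set A := LinearMap.toMatrix' f with hA
  have hf : f x = A.mulVec x := by
    rw [hA, ← Matrix.toLin'_apply, Matrix.toLin'_toMatrix']
  have hadj : adjL σ f y = ((A.map σ)ᵀ).mulVec y := by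
    rw [hA]
    exact Matrix.toLin'_apply _ y
  rw [hf, hadj]
  simp only [Matrix.mulVec, dotProduct, Matrix.transpose_apply, Matrix.map_apply,
    Finset.sum_mul, Finset.mul_sum, map_sum, _root_.map_mul, hσ2]
  rw [Finset.sum_comm]
  exact Finset.sum_congr rfl fun i _ => Finset.sum_congr rfl fun j _ => by ring

lemma det_adjL (σ : K ≃+* K) {n : ℕ} (f : (Fin n → K) →ₗ[K] (Fin n → K)) :
    LinearMap.det (adjL σ f) = σ (LinearMap.det f) := by
  rw [adjL, LinearMap.det_toLin', Matrix.det_transpose]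
  have h1 : ((LinearMap.toMatrix' f).map σ).det = σ ((LinearMap.toMatrix' f).det) :=
    (RingEquiv.map_det σ _).symm
  rw [h1, LinearMap.det_toMatrix']

end Aux4

set_option maxHeartbeats 1000000 in
/-- Duality reverses the module index:
`[Υ* : Ξ*]_𝒪 = conj([Ξ : Υ]_𝒪)`. -/
theorem moduleIndex_dual_eq_conj
    (K : Type*) [Field K] [NumberField K]
    (hdeg : Module.finrank ℚ K = 2)
    (ι : K →+* ℂ) (him : ∃ x : K, (ι x).im ≠ 0)
    (σ : K ≃+* K) (hσι : ∀ x : K, ι (σ x) = (starRingEnd ℂ) (ι x))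
    (n : ℕ)
    (Ξ Υ : Submodule (𝓞 K) (Fin n → K))
    (hΞrk : Submodule.span K (Ξ : Set (Fin n → K)) = ⊤) (hΞfg : Ξ.FG)
    (hΥrk : Submodule.span K (Υ : Set (Fin n → K)) = ⊤) (hΥfg : Υ.FG)
    (Ξd Υd : Submodule (𝓞 K) (Fin n → K))
    (hΞd : (Ξd : Set (Fin n → K)) = dualMod K σ Ξ)
    (hΥd : (Υd : Set (Fin n → K)) = dualMod K σ Υ) :
    ((moduleIndex K Υd Ξd : Submodule (𝓞 K) K) : Set K)
      = (fun x : K => σ x) '' ((moduleIndex K Ξ Υ : Submodule (𝓞 K) K) : Set K) := by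
  have hσ2 : ∀ x : K, σ (σ x) = x := sigma_sigma ι hσι
  have hσO : ∀ c : 𝓞 K, σ (c : K) ∈ integralClosure ℤ K := fun c =>
    (mem_integralClosure_iff ℤ K).mpr
    (IsIntegral.map σ.toRingHom.toIntAlgHom (RingOfIntegers.isIntegral_coe c))
  -- biduality
  have hbidual : (Υ : Set (Fin n → K)) = dualMod K σ Υd := by
    rw [dualMod_eq_dualSubmodule σ hσ2 Υd]
    have h1 : Υd.restrictScalars ℤ = (traceB σ n).dualSubmodule (Υ.restrictScalars ℤ) := by
      apply SetLike.ext'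
      rw [Submodule.coe_restrictScalars, hΥd, dualMod_eq_dualSubmodule σ hσ2 Υ]
    rw [h1, dual_dual σ hσ2 Υ hΥrk hΥfg, Submodule.coe_restrictScalars]
  -- f : Ξ → Υ gives adjoint : Υd → Ξd
  have fwd : ∀ f : (Fin n → K) →ₗ[K] (Fin n → K), (∀ x ∈ Ξ, f x ∈ Υ) →
      ∀ v ∈ Υd, adjL σ f v ∈ Ξd := by
    intro f hf v hv
    have hv' : v ∈ dualMod K σ Υ := by
      rw [← hΥd]; exact hv
    have : adjL σ f v ∈ dualMod K σ Ξ := by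
      intro x hx
      rw [epairK_eq_one_iff σ]
      have e1 : (∑ i, x i * σ (adjL σ f v i)) = ∑ i, (f x) i * σ (v i) :=
        (pair_adjL σ hσ2 f x v).symm
      rw [e1]
      exact (epairK_eq_one_iff σ (f x) v).mp (hv' (f x) (hf x hx))
    rw [← SetLike.mem_coe, hΞd]
    exact this
  -- g : Υd → Ξd gives adjoint : Ξ → Υ (via biduality)
  have bwd : ∀ g : (Fin n → K) →ₗ[K] (Fin n → K), (∀ v ∈ Υd, g v ∈ Ξd) →
      ∀ x ∈ Ξ, adjL σ g x ∈ Υ := by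
    intro g hg x hx
    have : adjL σ g x ∈ dualMod K σ Υd := by
      intro v hv
      rw [epairK_eq_one_iff σ]
      have e1 : (∑ i, v i * σ (adjL σ g x i)) = ∑ i, (g v) i * σ (x i) :=
        (pair_adjL σ hσ2 g v x).symm
      rw [e1]
      have hgv : g v ∈ dualMod K σ Ξ := by
        rw [← hΞd]; exact hg v hv
      have h2 := (epairK_eq_one_iff σ x (g v)).mp (hgv x hx)
      rwa [trace_pair_symm σ hσ2 x (g v)] at h2
    rw [← SetLike.mem_coe, hbidual]
    exact this
  -- generating sets agree
  have hgen : {d : K | ∃ g : (Fin n → K) →ₗ[K] (Fin n → K),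
        (∀ x ∈ Υd, g x ∈ Ξd) ∧ d = LinearMap.det g}
      = (fun x : K => σ x) ''
        {d : K | ∃ f : (Fin n → K) →ₗ[K] (Fin n → K),
          (∀ x ∈ Ξ, f x ∈ Υ) ∧ d = LinearMap.det f} := by
    ext d
    constructor
    · rintro ⟨g, hg, rfl⟩
      refine ⟨LinearMap.det (adjL σ g), ⟨adjL σ g, bwd g hg, rfl⟩, ?_⟩
      show σ (LinearMap.det (adjL σ g)) = LinearMap.det g
      rw [det_adjL, hσ2]
    · rintro ⟨d', ⟨f, hf, rfl⟩, rfl⟩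
      exact ⟨adjL σ f, fwd f hf, (det_adjL σ f).symm⟩
  -- image of span under σ
  have himg : ∀ S : Set K,
      ((Submodule.span (𝓞 K) ((fun x : K => σ x) '' S) : Submodule (𝓞 K) K) : Set K)
        = (fun x : K => σ x) '' ((Submodule.span (𝓞 K) S : Submodule (𝓞 K) K) : Set K) := by
    intro S
    apply Set.Subset.antisymm
    · intro z hz
      rw [SetLike.mem_coe] at hz
      induction hz using Submodule.span_induction with
      | mem w hw =>
          obtain ⟨s, hs, rfl⟩ := hw
          exact ⟨s, Submodule.subset_span hs, rfl⟩
      | zero => exact ⟨0, Submodule.zero_mem _, map_zero σ⟩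
      | add a b ha hb iha ihb =>
          obtain ⟨u, hu, hu'⟩ := iha
          obtain ⟨w, hw, hw'⟩ := ihb
          refine ⟨u + w, Submodule.add_mem _ hu hw, ?_⟩
          show σ (u + w) = a + b
          rw [map_add, show σ u = a from hu', show σ w = b from hw']
      | smul c a ha ih =>
          obtain ⟨u, hu, rfl⟩ := ih
          refine ⟨(⟨σ (c : K), hσO c⟩ : 𝓞 K) • u, Submodule.smul_mem _ _ hu, ?_⟩
          show σ ((⟨σ (c : K), hσO c⟩ : 𝓞 K) • u) = c • σ u
          erw [osmul, osmul, _root_.map_mul]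
          show σ (σ (c : K)) * σ u = (c : K) * σ u
          rw [hσ2]
    · rintro z ⟨w, hw, rfl⟩
      rw [SetLike.mem_coe] at hw
      induction hw using Submodule.span_induction with
      | mem s hs => exact Submodule.subset_span ⟨s, hs, rfl⟩
      | zero =>
          show σ (0 : K) ∈ _
          rw [map_zero]
          exact Submodule.zero_mem _
      | add a b ha hb iha ihb =>
          show σ (a + b) ∈ _
          rw [map_add]
          exact Submodule.add_mem _ iha ihb
      | smul c a ha ih =>
          show σ (c • a) ∈ _
          have hcs : σ (c • a) = (⟨σ (c : K), hσO c⟩ : 𝓞 K) • σ a := by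
            erw [osmul, osmul, _root_.map_mul]
            rfl
          rw [hcs]
          exact Submodule.smul_mem _ _ ih
  rw [moduleIndex, moduleIndex, hgen]
  exact himg _
end

section
/- Let $F/K$ be a degree-$n$ extension of number fields and $\mathfrak{g}$ an integral ideal of $K$ with $n! < N_{K/\mathbb{Q}}(\mathfrak{g})$. Given finitely many elements $x_{i,\pi} \in F \setminus \{0\}$ indexed by $i = 1,\dots,n$ and permutations $\pi \in S_{n-1}$ (so at most $n \cdot (n-1)! = n!$ elements), there exists $\theta \in \mathcal{O}_F$ such that $0 \notin \mathrm{Tr}_{F/K}\big((\theta + \mathfrak{g}\mathcal{O}_F)\, x_{i,\pi}\big)$ for all $i$ and $\pi$. (That is, $\theta + \mathfrak{g}\mathcal{O}_F$ avoids the trace-kernel translates simultaneously.) -/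
open NumberField
open scoped BigOperators Pointwise

set_option maxHeartbeats 1000000
set_option synthInstance.maxHeartbeats 400000

lemma relindex_smul_ideal (K : Type*) [Field K] [NumberField K]
    (𝔤 I : Ideal (𝓞 K)) (hI : I ≠ ⊥) :
    ((𝔤 * I).toAddSubgroup.relIndex I.toAddSubgroup) = Ideal.absNorm 𝔤 := by
  have hle : (𝔤 * I).toAddSubgroup ≤ I.toAddSubgroup := Ideal.mul_le_right
  have h1 := AddSubgroup.relIndex_mul_index hle
  have hidx : ∀ J : Ideal (𝓞 K), J.toAddSubgroup.index = Ideal.absNorm J := fun J => rfl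
  rw [hidx, hidx, map_mul Ideal.absNorm 𝔤 I] at h1
  have hIne : Ideal.absNorm I ≠ 0 := by
    rwa [ne_eq, Ideal.absNorm_eq_zero_iff]
  exact Nat.eq_of_mul_eq_mul_right (Nat.pos_of_ne_zero hIne) h1

/-- Let `F/K` be a degree-`n` extension of number fields and `𝔤` an
integral ideal of `K` with `n! < N_{K/ℚ}(𝔤)`.  Given nonzero elements
`x_{i,π} ∈ F` indexed by `i = 1,…,n` and `π ∈ S_{n-1}`, there exists `θ ∈ 𝒪_F`
such that `0 ∉ Tr_{F/K}((θ + 𝔤𝒪_F)·x_{i,π})` for all `i` and `π`. -/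
theorem exists_theta_avoiding_trace_kernels
    (K F : Type*) [Field K] [NumberField K] [Field F] [NumberField F]
    [Algebra K F] [Algebra (𝓞 K) F] [IsScalarTower (𝓞 K) K F]
    (n : ℕ) (hn : Module.finrank K F = n)
    (𝔤 : Ideal (𝓞 K)) (h𝔤 : 𝔤 ≠ ⊥)
    (hcard : Nat.factorial n < Ideal.absNorm 𝔤)
    (x : Fin n → Equiv.Perm (Fin (n - 1)) → F)
    (hx : ∀ i π, x i π ≠ 0)
    (gOF : Submodule (𝓞 K) F)
    (hgOF : gOF = 𝔤 • (Subalgebra.toSubmodule (integralClosure (𝓞 K) F))) :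
    ∃ θ : F, θ ∈ integralClosure (𝓞 K) F ∧
      ∀ (i : Fin n) (π : Equiv.Perm (Fin (n - 1))) (g : F),
        g ∈ gOF → Algebra.trace K F ((θ + g) * x i π) ≠ 0 := by
  classical
  set R := 𝓞 K with hR
  set O : Subalgebra R F := integralClosure R F with hO
  have hKF : FiniteDimensional K F := Module.Finite.right ℚ K F
  have hn1 : 0 < n := hn ▸ Module.finrank_pos
  have hinj : Function.Injective (algebraMap R K) := IsFractionRing.injective R K
  have hinjF : ∀ r : R, algebraMap R F r = 0 → r = 0 := by
    intro r hr
    have : algebraMap K F (algebraMap R K r) = 0 := by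
      rw [← IsScalarTower.algebraMap_apply]; exact hr
    have h2 : algebraMap R K r = 0 := by
      exact (map_eq_zero (algebraMap K F)).mp this
    exact hinj (by simpa using h2)
  -- clear denominators on x i π
  have hint : ∀ i π, ∃ x' : F, x' ∈ O ∧ x' ≠ 0 ∧ ∃ d : R, d • x i π = x' := by
    intro i π
    have halg : IsAlgebraic R (x i π) := by
      have h1 : IsAlgebraic K (x i π) := (Algebra.IsAlgebraic.of_finite K F).isAlgebraic _
      exact (IsFractionRing.isAlgebraic_iff R K F).mpr h1
    obtain ⟨y, d, hd0, hdy⟩ : ∃ (y : integralClosure R F) (d : R), d ≠ 0 ∧ algebraMap R F d * x i π = y := by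
      obtain ⟨d, hd0, hdint⟩ := halg.exists_integral_multiple
      exact ⟨⟨d • x i π, hdint⟩, d, hd0, (Algebra.smul_def _ _).symm⟩
    refine ⟨(y : F), y.2, ?_, d, ?_⟩
    · rw [← hdy]
      exact mul_ne_zero (fun h => hd0 (hinjF d h)) (hx i π)
    · rw [← hdy, Algebra.smul_def]
  choose x' hx'O hx'0 d hdx using hint
  -- the R-linear trace-multiplication maps
  let m : Fin n → Equiv.Perm (Fin (n - 1)) → (F →ₗ[R] K) := fun i π =>
    ((Algebra.trace K F).comp (LinearMap.mulLeft K (x' i π))).restrictScalars R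
  have hm : ∀ i π y, m i π y = Algebra.trace K F (x' i π * y) := fun _ _ _ => rfl
  -- the "ideal" 𝔞 = Tr(x' * O)
  let 𝔞 : Fin n → Equiv.Perm (Fin (n - 1)) → Submodule R K := fun i π =>
    Submodule.map (m i π) (Subalgebra.toSubmodule O)
  -- 𝔞 consists of integral elements
  have h𝔞int : ∀ i π y, y ∈ 𝔞 i π → ∃ r : R, algebraMap R K r = y := by
    intro i π y hy
    obtain ⟨z, hz, rfl⟩ := hy
    rw [hm]
    have hzint : IsIntegral R (x' i π * z) := (O.mul_mem (hx'O i π) hz : _)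
    have htr : IsIntegral R (Algebra.trace K F (x' i π * z)) :=
      Algebra.isIntegral_trace hzint
    obtain ⟨r, hr⟩ := IsIntegrallyClosed.isIntegral_iff.mp htr
    exact ⟨r, hr⟩
  let I : Fin n → Equiv.Perm (Fin (n - 1)) → Ideal R := fun i π =>
    Submodule.comap (Algebra.linearMap R K) (𝔞 i π)
  have hImap : ∀ i π, Submodule.map (Algebra.linearMap R K) (I i π) = 𝔞 i π := by
    intro i π
    apply le_antisymm
    · exact Submodule.map_comap_le _ _
    · intro y hy
      obtain ⟨r, hr⟩ := h𝔞int i π y hy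
      exact ⟨r, Submodule.mem_comap.mpr (by rwa [Algebra.linearMap_apply, hr]), hr⟩
  -- 𝔞 ≠ ⊥
  have h𝔞ne : ∀ i π, I i π ≠ ⊥ := by
    intro i π hbot
    have h𝔞bot : 𝔞 i π = ⊥ := by rw [← hImap, hbot, Submodule.map_bot]
    -- find a nonzero element of 𝔞
    have halg : IsAlgebraic R ((x' i π)⁻¹) := by
      have h1 : IsAlgebraic K ((x' i π)⁻¹) := (Algebra.IsAlgebraic.of_finite K F).isAlgebraic _
      exact (IsFractionRing.isAlgebraic_iff R K F).mpr h1
    obtain ⟨y, e, he0, hey⟩ : ∃ (y : integralClosure R F) (e : R), e ≠ 0 ∧ algebraMap R F e * (x' i π)⁻¹ = y := by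
      obtain ⟨e, he0, heint⟩ := halg.exists_integral_multiple
      exact ⟨⟨e • (x' i π)⁻¹, heint⟩, e, he0, (Algebra.smul_def _ _).symm⟩
    have hmem : m i π (y : F) ∈ 𝔞 i π := ⟨(y : F), y.2, rfl⟩
    rw [h𝔞bot, Submodule.mem_bot] at hmem
    apply he0
    have : m i π (y : F) = algebraMap R K e * (Module.finrank K F : K) := by
      rw [hm, ← hey, mul_comm (algebraMap R F e) _, ← mul_assoc,
        mul_inv_cancel₀ (hx'0 i π), one_mul, IsScalarTower.algebraMap_apply R K F,
        Algebra.trace_algebraMap, nsmul_eq_mul, mul_comm]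
    rw [this] at hmem
    rcases mul_eq_zero.mp hmem with h | h
    · exact hinj (by simpa using h)
    · exfalso
      have : (Module.finrank K F : K) ≠ 0 := by
        rw [hn]; exact_mod_cast Nat.cast_ne_zero.mpr hn1.ne'
      exact this h
  -- the bad subgroups
  let f : ∀ (_ : Fin n) (_ : Equiv.Perm (Fin (n - 1))), (↥O →ₗ[R] K) := fun i π =>
    (m i π).comp O.val.toLinearMap
  let A : ∀ (_ : Fin n) (_ : Equiv.Perm (Fin (n - 1))), AddSubgroup K := fun i π =>
    (𝔤 • 𝔞 i π).toAddSubgroup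
  let H : ∀ (_ : Fin n) (_ : Equiv.Perm (Fin (n - 1))), AddSubgroup ↥O := fun i π =>
    (A i π).comap ((f i π).toAddMonoidHom)
  have hrange : ∀ i π, ((f i π).toAddMonoidHom).range = (𝔞 i π).toAddSubgroup := by
    intro i π
    ext y
    simp only [AddMonoidHom.mem_range, LinearMap.toAddMonoidHom_coe,
      Submodule.mem_toAddSubgroup]
    constructor
    · rintro ⟨θ, hθ⟩
      exact ⟨(θ : F), θ.2, hθ⟩
    · rintro ⟨z, hz, hzy⟩
      exact ⟨⟨z, hz⟩, hzy⟩
  have h𝔤𝔞 : ∀ i π, Submodule.map (Algebra.linearMap R K) (𝔤 * I i π) = 𝔤 • 𝔞 i π := by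
    intro i π
    rw [← Ideal.smul_eq_mul, Submodule.map_smul'', hImap]
  let ψ : R →+ K := (algebraMap R K).toAddMonoidHom
  have hcomapA : ∀ i π, (A i π).comap ψ = (𝔤 * I i π).toAddSubgroup := by
    intro i π
    ext r
    simp only [AddSubgroup.mem_comap, Submodule.mem_toAddSubgroup, A]
    rw [← h𝔤𝔞]
    constructor
    · rintro ⟨s, hs, hsr⟩
      cases hinj hsr
      exact hs
    · intro hr
      exact ⟨r, hr, rfl⟩
  have hmapI : ∀ i π, AddSubgroup.map ψ (I i π).toAddSubgroup = (𝔞 i π).toAddSubgroup := by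
    intro i π
    ext y
    simp only [AddSubgroup.mem_map, Submodule.mem_toAddSubgroup]
    rw [← hImap]
    constructor
    · rintro ⟨r, hr, rfl⟩
      exact ⟨r, hr, rfl⟩
    · rintro ⟨r, hr, rfl⟩
      exact ⟨r, hr, rfl⟩
  have hindex : ∀ i π, (H i π).index = Ideal.absNorm 𝔤 := by
    intro i π
    show ((A i π).comap ((f i π).toAddMonoidHom)).index = _
    rw [AddSubgroup.index_comap, hrange]
    have h2 := AddSubgroup.relIndex_comap (H := A i π) ψ (I i π).toAddSubgroup
    rw [hcomapA, hmapI] at h2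
    rw [← h2, relindex_smul_ideal K 𝔤 (I i π) (h𝔞ne i π)]
  -- covering argument
  have hstep : ∃ θ : ↥O, ∀ i π, θ ∉ H i π := by
    by_contra hcon
    push_neg at hcon
    have hcover : ⋃ p ∈ (Finset.univ : Finset (Fin n × Equiv.Perm (Fin (n - 1)))),
        ((0 : ↥O) +ᵥ (H p.1 p.2 : Set ↥O)) = Set.univ := by
      ext θ
      simp only [Set.mem_iUnion, Set.mem_univ, iff_true]
      obtain ⟨i, π, hθ⟩ := hcon θ
      exact ⟨(i, π), Finset.mem_univ _, by simpa using hθ⟩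
    have h1 := AddSubgroup.one_le_sum_inv_index_of_leftCoset_cover hcover
    have h2 : ∑ p ∈ (Finset.univ : Finset (Fin n × Equiv.Perm (Fin (n - 1)))),
        ((H p.1 p.2).index : ℚ)⁻¹ = (n.factorial : ℚ) * ((Ideal.absNorm 𝔤 : ℚ))⁻¹ := by
      rw [Finset.sum_congr rfl (fun p _ => by rw [hindex p.1 p.2]),
        Finset.sum_const, Finset.card_univ, Fintype.card_prod, Fintype.card_fin,
        Fintype.card_perm, Fintype.card_fin, Nat.mul_factorial_pred hn1.ne',
        nsmul_eq_mul]
    rw [h2] at h1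
    have hpos : (0 : ℚ) < (Ideal.absNorm 𝔤 : ℚ) := by
      have : 0 < Ideal.absNorm 𝔤 := lt_of_le_of_lt (Nat.zero_le _) hcard
      exact_mod_cast this
    have h3 : (n.factorial : ℚ) * ((Ideal.absNorm 𝔤 : ℚ))⁻¹ < 1 := by
      rw [← div_eq_mul_inv, div_lt_one hpos]
      exact_mod_cast hcard
    linarith
  obtain ⟨θ, hθ⟩ := hstep
  refine ⟨(θ : F), θ.2, ?_⟩
  intro i π g hg htr0
  apply hθ i π
  show (f i π) θ ∈ A i π
  have hfθ : (f i π) θ = (m i π) (θ : F) := rfl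
  -- m (θ + g) = 0
  have harg : x' i π * ((θ : F) + g) = d i π • (((θ : F) + g) * x i π) := by
    rw [← hdx, smul_mul_assoc, mul_comm]
  have hm0 : (m i π) ((θ : F) + g) = 0 := by
    rw [hm, harg, LinearMap.map_smul_of_tower, htr0, smul_zero]
  have hmg : (m i π) g ∈ 𝔤 • 𝔞 i π := by
    have h1 : Submodule.map (m i π) gOF = 𝔤 • 𝔞 i π := by
      rw [hgOF, Submodule.map_smul'']
    rw [← h1]
    exact Submodule.mem_map_of_mem hg
  rw [hfθ]
  show (m i π) (θ : F) ∈ (𝔤 • 𝔞 i π : Submodule R K)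
  have hmθ : (m i π) (θ : F) = -((m i π) g) := by
    have h4 := (m i π).map_add (θ : F) g
    rw [hm0] at h4
    exact eq_neg_of_add_eq_zero_left h4.symm
  rw [hmθ]
  exact Submodule.neg_mem _ hmg
end

section
/- Let $A_1, \dots, A_n \in \Gamma_{\mathfrak{l}}$ (automorphisms of $\mathfrak{l}\mathcal{O}_{(\mathfrak{l})} \times \mathcal{O}_{(\mathfrak{l})}^{n-1}$), and for a tuple $d = (d_1,\dots,d_n)$ with some $d_i \neq 1$, let $i$ be minimal with $d_i \neq 1$, so that for $x$ in the set $X(d)$, the first $d_i - 1 \geq 1$ coordinates of $xA_i$ vanish. Let $\Xi \in W_{n,\mathfrak{l}}$ and $u \in \mathfrak{l}\mathcal{O}_{(\mathfrak{l})} \times \mathcal{O}_{(\mathfrak{l})}^{n-1}$. Then for $x \in \Xi$ with the first coordinate of $(x+u)A_i$ equal to zero, one has $x \in \mathfrak{l}\mathcal{O}_{(\mathfrak{l})}\times\mathcal{O}_{(\mathfrak{l})}^{n-1}$; consequently $X(d) \cap (\Xi + u) = X(d) \cap (\Xi_{\mathfrak{l}} + u)$. -/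
open NumberField
open scoped BigOperators

/-- The localization `𝒪_{(𝔩)} ⊂ K` of `𝒪` at the prime `𝔩`. -/
def locAt (K : Type*) [Field K] [NumberField K] (𝔩 : Ideal (𝓞 K)) : Set K :=
  {x | ∃ a b : 𝓞 K, b ∉ 𝔩 ∧ x * algebraMap (𝓞 K) K b = algebraMap (𝓞 K) K a}

/-- The ideal `𝔩𝒪_{(𝔩)} ⊂ K`. -/
def locAtP (K : Type*) [Field K] [NumberField K] (𝔩 : Ideal (𝓞 K)) : Set K :=
  {x | ∃ a b : 𝓞 K, a ∈ 𝔩 ∧ b ∉ 𝔩 ∧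
    x * algebraMap (𝓞 K) K b = algebraMap (𝓞 K) K a}

/-- The standard module `𝔩𝒪_{(𝔩)} × 𝒪_{(𝔩)}^{n-1} ⊂ Kⁿ`. -/
def stdLat (K : Type*) [Field K] [NumberField K] (n : ℕ) [NeZero n]
    (𝔩 : Ideal (𝓞 K)) : Set (Fin n → K) :=
  {x | x 0 ∈ locAtP K 𝔩 ∧ ∀ i : Fin n, i ≠ 0 → x i ∈ locAt K 𝔩}

/-- `Ξ ∈ W_{n,𝔩}`: a rank-`n` `𝒪`-module with `Ξ ⊗ 𝒪_{(𝔩)} = 𝒪_{(𝔩)}ⁿ`. -/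
def IsWnl (K : Type*) [Field K] [NumberField K] (n : ℕ) (𝔩 : Ideal (𝓞 K))
    (Ξ : Submodule (𝓞 K) (Fin n → K)) : Prop :=
  (∀ x ∈ Ξ, ∀ i, x i ∈ locAt K 𝔩) ∧
  (∀ x : Fin n → K, (∀ i, x i ∈ locAt K 𝔩) → ∃ s : 𝓞 K, s ∉ 𝔩 ∧ s • x ∈ Ξ)


section Aux

variable {K : Type*} [Field K] [NumberField K] {𝔩 : Ideal (𝓞 K)}

lemma one_notMem_of_prime (hp : 𝔩.IsPrime) : (1 : 𝓞 K) ∉ 𝔩 := fun h =>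
  hp.ne_top (Ideal.eq_top_of_isUnit_mem _ h isUnit_one)

lemma locAt_zero (hp : 𝔩.IsPrime) : (0 : K) ∈ locAt K 𝔩 :=
  ⟨0, 1, one_notMem_of_prime hp, by simp⟩

lemma locAt_add (hp : 𝔩.IsPrime) {x y : K} (hx : x ∈ locAt K 𝔩) (hy : y ∈ locAt K 𝔩) :
    x + y ∈ locAt K 𝔩 := by
  obtain ⟨a, b, hb, hxb⟩ := hx
  obtain ⟨a', b', hb', hyb⟩ := hy
  refine ⟨a * b' + a' * b, b * b', fun h => ((hp.mem_or_mem h).elim hb hb'), ?_⟩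
  simp only [map_mul, map_add]
  linear_combination (algebraMap (𝓞 K) K b') * hxb + (algebraMap (𝓞 K) K b) * hyb

lemma locAt_neg (hp : 𝔩.IsPrime) {x : K} (hx : x ∈ locAt K 𝔩) : -x ∈ locAt K 𝔩 := by
  obtain ⟨a, b, hb, hxb⟩ := hx
  exact ⟨-a, b, hb, by simp only [map_neg]; linear_combination -hxb⟩

lemma locAt_sub (hp : 𝔩.IsPrime) {x y : K} (hx : x ∈ locAt K 𝔩) (hy : y ∈ locAt K 𝔩) :
    x - y ∈ locAt K 𝔩 := by
  rw [sub_eq_add_neg]; exact locAt_add hp hx (locAt_neg hp hy)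

lemma locAt_mul (hp : 𝔩.IsPrime) {x y : K} (hx : x ∈ locAt K 𝔩) (hy : y ∈ locAt K 𝔩) :
    x * y ∈ locAt K 𝔩 := by
  obtain ⟨a, b, hb, hxb⟩ := hx
  obtain ⟨a', b', hb', hyb⟩ := hy
  refine ⟨a * a', b * b', fun h => ((hp.mem_or_mem h).elim hb hb'), ?_⟩
  simp only [map_mul]
  linear_combination (y * algebraMap (𝓞 K) K b') * hxb + (algebraMap (𝓞 K) K a) * hyb

lemma locAt_sum (hp : 𝔩.IsPrime) {ι : Type*} (s : Finset ι) (f : ι → K)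
    (hf : ∀ i ∈ s, f i ∈ locAt K 𝔩) : ∑ i ∈ s, f i ∈ locAt K 𝔩 := by
  classical
  induction s using Finset.induction_on with
  | empty => simpa using locAt_zero hp
  | insert _ _ hns ih =>
    rw [Finset.sum_insert hns]
    exact locAt_add hp (hf _ (Finset.mem_insert_self _ _))
      (ih fun i hi => hf i (Finset.mem_insert_of_mem hi))

lemma locAtP_zero (hp : 𝔩.IsPrime) : (0 : K) ∈ locAtP K 𝔩 :=
  ⟨0, 1, 𝔩.zero_mem, one_notMem_of_prime hp, by simp⟩

lemma locAtP_subset : locAtP K 𝔩 ⊆ locAt K 𝔩 := fun _ ⟨a, b, _, hb, h⟩ => ⟨a, b, hb, h⟩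

lemma locAtP_sub (hp : 𝔩.IsPrime) {x y : K} (hx : x ∈ locAtP K 𝔩) (hy : y ∈ locAtP K 𝔩) :
    x - y ∈ locAtP K 𝔩 := by
  obtain ⟨a, b, ha, hb, hxb⟩ := hx
  obtain ⟨a', b', ha', hb', hyb⟩ := hy
  refine ⟨a * b' - a' * b, b * b',
    Ideal.sub_mem _ (Ideal.mul_mem_right _ _ ha) (Ideal.mul_mem_right _ _ ha'),
    fun h => ((hp.mem_or_mem h).elim hb hb'), ?_⟩
  simp only [map_mul, map_sub]
  linear_combination (algebraMap (𝓞 K) K b') * hxb - (algebraMap (𝓞 K) K b) * hyb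

lemma vecMul_apply {n : ℕ} (v : Fin n → K) (A : Matrix (Fin n) (Fin n) K) (j : Fin n) :
    Matrix.vecMul v A j = ∑ m, v m * A m j := by
  simp [Matrix.vecMul, dotProduct]

/-- Key step: if `v ∈ 𝒪_{(𝔩)}ⁿ` and `(vA)₀ ∈ 𝔩𝒪_{(𝔩)}`, then `v ∈ stdLat`. -/
lemma key_step {n : ℕ} [NeZero n] (hp : 𝔩.IsPrime)
    (A : Matrix (Fin n) (Fin n) K) (hAdet : IsUnit A.det)
    (hAent : ∀ i j, A i j ∈ locAt K 𝔩)
    (hAbij : Set.BijOn (fun x : Fin n → K => Matrix.vecMul x A)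
      (stdLat K n 𝔩) (stdLat K n 𝔩))
    (v : Fin n → K) (hv : ∀ i, v i ∈ locAt K 𝔩)
    (hv0 : Matrix.vecMul v A 0 ∈ locAtP K 𝔩) : v ∈ stdLat K n 𝔩 := by
  have hvA : Matrix.vecMul v A ∈ stdLat K n 𝔩 := by
    refine ⟨hv0, fun j _ => ?_⟩
    rw [vecMul_apply]
    exact locAt_sum hp _ _ fun m _ => locAt_mul hp (hv m) (hAent m j)
  obtain ⟨w, hw, hwA⟩ := hAbij.surjOn hvA
  have hwv : w = v := by
    have h1 : Matrix.vecMul w A = Matrix.vecMul v A := hwA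
    have h2 := congrArg (fun z => Matrix.vecMul z A⁻¹) h1
    simpa [Matrix.vecMul_vecMul, Matrix.mul_nonsing_inv A hAdet] using h2
  exact hwv ▸ hw

end Aux

/-- Let `A₁,…,Aₙ ∈ Γ_𝔩` and let `d` be a tuple with minimal index
`i₀` such that `d_{i₀} ≠ 1`.  For `u ∈ 𝔩𝒪_{(𝔩)} × 𝒪_{(𝔩)}^{n-1}` and `x ∈ Ξ` with
the first coordinate of `(x+u)A_{i₀}` equal to zero, one has
`x ∈ 𝔩𝒪_{(𝔩)} × 𝒪_{(𝔩)}^{n-1}`; consequently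
`X(d) ∩ (Ξ + u) = X(d) ∩ (Ξ_𝔩 + u)`. -/
theorem smoothing_support_identity
    (K : Type*) [Field K] [NumberField K]
    (hdeg : Module.finrank ℚ K = 2)
    (n : ℕ) [NeZero n]
    (𝔩 : Ideal (𝓞 K)) (h𝔩p : 𝔩.IsPrime) (h𝔩 : 𝔩 ≠ ⊥)
    (Ξ : Submodule (𝓞 K) (Fin n → K)) (hΞ : IsWnl K n 𝔩 Ξ)
    (Ξl : Submodule (𝓞 K) (Fin n → K))
    (hΞl : (Ξl : Set (Fin n → K)) = {x | x ∈ Ξ ∧ x 0 ∈ locAtP K 𝔩})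
    (u : Fin n → K) (hu : u ∈ stdLat K n 𝔩)
    (A : Fin n → Matrix (Fin n) (Fin n) K)
    (hAdet : ∀ k, IsUnit (A k).det)
    (hAent : ∀ k i j, A k i j ∈ locAt K 𝔩)
    (hAbij : ∀ k, Set.BijOn (fun x : Fin n → K => Matrix.vecMul x (A k))
      (stdLat K n 𝔩) (stdLat K n 𝔩))
    (d : Fin n → Fin n) (i₀ : Fin n)
    (hi₀ : d i₀ ≠ 0) (hmin : ∀ j : Fin n, j < i₀ → d j = 0) :
    (∀ x : Fin n → K, x ∈ Ξ →
      Matrix.vecMul (x + u) (A i₀) 0 = 0 → x ∈ stdLat K n 𝔩)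
    ∧ ({y : Fin n → K |
          (∀ k : Fin n, (∀ j : Fin n, j < d k → ∑ m, y m * A k m j = 0) ∧
            ∑ m, y m * A k m (d k) ≠ 0)}
        ∩ {y | ∃ x ∈ Ξ, y = x + u})
      = ({y : Fin n → K |
            (∀ k : Fin n, (∀ j : Fin n, j < d k → ∑ m, y m * A k m j = 0) ∧
              ∑ m, y m * A k m (d k) ≠ 0)}
          ∩ {y | ∃ x ∈ Ξl, y = x + u}) := by
  have hkey : ∀ x : Fin n → K, x ∈ Ξ →
      Matrix.vecMul (x + u) (A i₀) 0 = 0 → x ∈ stdLat K n 𝔩 := by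
    intro x hx h0
    have hxR : ∀ i, x i ∈ locAt K 𝔩 := hΞ.1 x hx
    have huR : ∀ i, u i ∈ locAt K 𝔩 := by
      intro i
      by_cases hi : i = 0
      · exact hi ▸ locAtP_subset hu.1
      · exact hu.2 i hi
    have hvstd : x + u ∈ stdLat K n 𝔩 := by
      refine key_step h𝔩p (A i₀) (hAdet i₀) (hAent i₀) (hAbij i₀) _
        (fun i => locAt_add h𝔩p (hxR i) (huR i)) ?_
      rw [h0]; exact locAtP_zero h𝔩p
    refine ⟨?_, fun i hi => ?_⟩
    · have : x 0 = (x + u) 0 - u 0 := by simp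
      rw [this]
      exact locAtP_sub h𝔩p hvstd.1 hu.1
    · have : x i = (x + u) i - u i := by simp
      rw [this]
      exact locAt_sub h𝔩p (hvstd.2 i hi) (huR i)
  refine ⟨hkey, ?_⟩
  ext y
  constructor
  · rintro ⟨hS, x, hxΞ, rfl⟩
    refine ⟨hS, x, ?_, rfl⟩
    have hv0 : Matrix.vecMul (x + u) (A i₀) 0 = 0 := by
      rw [vecMul_apply]
      exact (hS i₀).1 0 (lt_of_le_of_ne (Fin.zero_le _) (Ne.symm hi₀))
    have hxstd := hkey x hxΞ hv0
    show x ∈ (Ξl : Set (Fin n → K))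
    rw [hΞl]
    exact ⟨hxΞ, hxstd.1⟩
  · rintro ⟨hS, x, hxΞl, rfl⟩
    have hx : x ∈ (Ξl : Set (Fin n → K)) := hxΞl
    rw [hΞl] at hx
    exact ⟨hS, x, hx.1, rfl⟩
end
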